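/- Let f be a (p,q)-colouring of a graph G and f' be obtained from f by adding 1 (mod p) to the colour of every vertex of a set X, with f' also a proper (p,q)-colouring. Let D_f be the digraph on V(G) with an arc from u to v whenever uv ∈ E(G) and f(v) - f(u) ≡ q (mod p). Then f' can be obtained from f by a sequence of proper (p,q)-colourings each changing the colour of a single vertex of X (each vertex changed exactly once, increasing its colour by 1 mod p) if and only if the induced subdigraph D_f[X] contains no directed cycle. -/

import Mathlib

/-- A `(p,q)`-colouring of `G` with colours in `ℤ/pℤ`. -/
def IsZCol {V : Type*} (G : SimpleGraph V) (p q : ℕ) (f : V → ZMod p) : Prop :=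
  ∀ ⦃u v : V⦄, G.Adj u v → q ≤ (f u - f v).val ∧ (f u - f v).val ≤ p - q

private lemma mod_small (a p : ℕ) (h : a ≤ p) (hp : 0 < p) :
    a % p = if a = p then 0 else a := by
  split
  · simp [*]
  · exact Nat.mod_eq_of_lt (by omega)

private lemma zmod_val_eq_iff {p : ℕ} [NeZero p] (x : ZMod p) (n : ℕ) (hn : n < p) :
    x = (n : ZMod p) ↔ x.val = n := by
  constructor
  · rintro rfl; exact ZMod.val_cast_of_lt hn
  · intro h; rw [← h]; exact (ZMod.natCast_rightInverse x).symm

private lemma zmod_sub_one_val {p : ℕ} [NeZero p] (x : ZMod p) (h1 : 1 ≤ x.val) :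
    (x - 1).val = x.val - 1 := by
  have hx : ((x.val : ℕ) : ZMod p) = x := ZMod.natCast_rightInverse x
  have h2 : ((x.val - 1 : ℕ) : ZMod p) = x - 1 := by
    rw [Nat.cast_sub h1, hx, Nat.cast_one]
  rw [← h2]
  exact ZMod.val_cast_of_lt (by have := x.val_lt; omega)

/-- Key characterization: the shifted colouring on a set `S ⊆ X` is proper iff `S` is
closed under the arc relation (restricted to targets in `X`). -/
private lemma key {V : Type*} [DecidableEq V] (G : SimpleGraph V) (p q : ℕ)
    (hq : 0 < q) (h2 : 2 * q ≤ p)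
    (f : V → ZMod p) (X : Finset V)
    (hf : IsZCol G p q f)
    (hf' : IsZCol G p q (fun v => if v ∈ X then f v + 1 else f v))
    (S : V → Prop) [DecidablePred S] (hSX : ∀ v, S v → v ∈ X) :
    IsZCol G p q (fun v => if S v then f v + 1 else f v) ↔
      ∀ a b, G.Adj a b → f b - f a = (q : ZMod p) → S a → b ∈ X → S b := by
  haveI : NeZero p := ⟨by omega⟩
  haveI : Fact (1 < p) := ⟨by omega⟩
  have hqp : q < p := by omega
  have hpq : ((p - q : ℕ) : ZMod p) = -(q : ZMod p) := by
    rw [Nat.cast_sub (by omega : q ≤ p), ZMod.natCast_self]; ring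
  have key_eq : ∀ x y : ZMod p, (y - x = (q : ZMod p)) ↔ (x - y).val = p - q := by
    intro x y
    rw [← zmod_val_eq_iff (x - y) (p - q) (by omega), hpq]
    constructor
    · intro h; linear_combination -h
    · intro h; linear_combination -h
  have add_one_val : ∀ x : ZMod p, (x + 1).val = (x.val + 1) % p := by
    intro x; rw [ZMod.val_add, ZMod.val_one]
  constructor
  · -- proper ⇒ closed
    intro hg a b hab harc hSa hbX
    by_contra hSb
    have h1 := hg hab
    simp only [if_pos hSa, if_neg hSb] at h1
    have e : f a + 1 - f b = (f a - f b) + 1 := by ring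
    rw [e, add_one_val] at h1
    have hv : (f a - f b).val = p - q := (key_eq _ _).1 harc
    rw [hv, mod_small _ _ (by omega) (by omega)] at h1
    split at h1 <;> omega
  · -- closed ⇒ proper
    intro hcl u v huv
    have hb := hf huv
    by_cases hSu : S u <;> by_cases hSv : S v <;>
      simp only [if_pos, if_neg, hSu, hSv, if_true, if_false]
    · have e : f u + 1 - (f v + 1) = f u - f v := by ring
      rw [e]; exact hb
    · -- S u, ¬ S v
      by_cases hvX : v ∈ X
      · have hnarc : (f u - f v).val ≠ p - q := by
          intro h
          exact hSv (hcl u v huv ((key_eq _ _).2 h) hSu hvX)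
        have e : f u + 1 - f v = (f u - f v) + 1 := by ring
        rw [e, add_one_val, mod_small _ _ (by have := (f u - f v).val_lt; omega) (by omega)]
        split <;> omega
      · have h1 := hf' huv
        simp only [if_pos (hSX u hSu), if_neg hvX] at h1
        exact h1
    · -- ¬ S u, S v
      by_cases huX : u ∈ X
      · have hnarc : (f u - f v).val ≠ q := by
          intro h
          have : f u - f v = (q : ZMod p) := (zmod_val_eq_iff _ _ hqp).2 h
          exact hSu (hcl v u huv.symm this hSv huX)
        have e : f u - (f v + 1) = (f u - f v) - 1 := by ring
        rw [e, zmod_sub_one_val _ (by omega)]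
        omega
      · have h1 := hf' huv
        simp only [if_neg huX, if_pos (hSX v hSv)] at h1
        exact h1
    · exact hb

private lemma mem_take_iff_indexOf {V : Type*} [DecidableEq V] {a : V} :
    ∀ (l : List V), a ∈ l → ∀ n, (a ∈ l.take n ↔ l.idxOf a < n)
  | [], h => by simp at h
  | c :: t, h => by
    intro n
    cases n with
    | zero => simp
    | succ n =>
      by_cases hac : a = c
      · subst hac
        simp [List.take_succ_cons, List.idxOf_cons_self]
      · have hat : a ∈ t := by
          rcases List.mem_cons.1 h with h' | h'
          · exact absurd h' hac
          · exact h'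
        rw [List.take_succ_cons, List.mem_cons, List.idxOf_cons_ne _ (Ne.symm hac)]
        simp only [hac, false_or]
        rw [mem_take_iff_indexOf t hat n]
        omega

/-- Topological sorting of a finite set w.r.t. an acyclic relation: every prefix of the
list is closed under the relation (for targets inside the set). -/
private lemma topo {V : Type*} [DecidableEq V] (r : V → V → Prop)
    (hirr : ∀ v, ¬ Relation.TransGen r v v) (Y : Finset V) :
    ∃ l : List V, l.Nodup ∧ (∀ v, v ∈ l ↔ v ∈ Y) ∧
      ∀ a b n, r a b → b ∈ Y → a ∈ l.take n → b ∈ l.take n := by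
  induction Y using Finset.strongInductionOn with
  | _ Y ih =>
    rcases Y.eq_empty_or_nonempty with rfl | ⟨y, hy⟩
    · exact ⟨[], List.nodup_nil, by simp, by intro a b n _ _ h; simp at h⟩
    · haveI : IsTrans {x // x ∈ Y} (fun a b => Relation.TransGen r b.1 a.1) :=
        ⟨fun _ _ _ hab hbc => hbc.trans hab⟩
      haveI : IsIrrefl {x // x ∈ Y} (fun a b => Relation.TransGen r b.1 a.1) :=
        ⟨fun a h => hirr a.1 h⟩
      obtain ⟨m, -, hmin⟩ :=
        (Finite.wellFounded_of_trans_of_irrefl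
          (fun (a b : {x // x ∈ Y}) => Relation.TransGen r b.1 a.1)).has_min
          Set.univ ⟨⟨y, hy⟩, trivial⟩
      have hm : ∀ b ∈ Y, ¬ r m.1 b := fun b hb hrb =>
        hmin ⟨b, hb⟩ trivial (Relation.TransGen.single hrb)
      obtain ⟨l', hnd, hmem, hcl⟩ := ih (Y.erase m.1) (Finset.erase_ssubset m.2)
      have hml' : m.1 ∉ l' := fun h => (Finset.mem_erase.1 ((hmem m.1).1 h)).1 rfl
      refine ⟨m.1 :: l', List.nodup_cons.2 ⟨hml', hnd⟩, ?_, ?_⟩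
      · intro v
        rw [List.mem_cons, hmem v, Finset.mem_erase]
        constructor
        · rintro (rfl | ⟨-, h⟩)
          · exact m.2
          · exact h
        · intro hv
          by_cases hvm : v = m.1
          · exact Or.inl hvm
          · exact Or.inr ⟨hvm, hv⟩
      · intro a b n hr hbY ha
        cases n with
        | zero => simp at ha
        | succ n =>
          rw [List.take_succ_cons, List.mem_cons] at ha
          rcases ha with rfl | ha
          · exact absurd hr (hm b hbY)
          · rw [List.take_succ_cons, List.mem_cons]
            by_cases hbm : b = m.1
            · exact Or.inl hbm
            · exact Or.inr (hcl a b n hr (Finset.mem_erase.2 ⟨hbm, hbY⟩) ha)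

theorem stmt9 {V : Type*} [DecidableEq V] (G : SimpleGraph V) (p q : ℕ)
    (hq : 0 < q) (h2 : 2 * q ≤ p)
    (f : V → ZMod p) (X : Finset V)
    (hf : IsZCol G p q f)
    (hf' : IsZCol G p q (fun v => if v ∈ X then f v + 1 else f v)) :
    (∃ l : List V, l.Nodup ∧ (∀ v : V, v ∈ l ↔ v ∈ X) ∧
        ∀ n ≤ l.length,
          IsZCol G p q (fun v => if v ∈ l.take n then f v + 1 else f v)) ↔
      ¬ ∃ v ∈ X, Relation.TransGen
          (fun a b => a ∈ X ∧ b ∈ X ∧ G.Adj a b ∧ f b - f a = (q : ZMod p)) v v := by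
  set r : V → V → Prop :=
    fun a b => a ∈ X ∧ b ∈ X ∧ G.Adj a b ∧ f b - f a = (q : ZMod p) with hr
  constructor
  · rintro ⟨l, hnd, hmem, hcol⟩ ⟨v, hvX, hcyc⟩
    have step : ∀ a b, r a b → l.idxOf b < l.idxOf a := by
      rintro a b ⟨haX, hbX, hab, harc⟩
      have hal : a ∈ l := (hmem a).2 haX
      have hbl : b ∈ l := (hmem b).2 hbX
      set n : ℕ := l.idxOf a + 1 with hn
      have hnl : n ≤ l.length := List.idxOf_lt_length_iff.2 hal
      have hclosed := (key G p q hq h2 f X hf hf' (fun v => v ∈ l.take n)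
        (fun v hv => (hmem v).1 (List.take_subset n l hv))).1 (hcol n hnl)
      have haT : a ∈ l.take n := (mem_take_iff_indexOf l hal n).2 (by omega)
      have hbT : b ∈ l.take n := hclosed a b hab harc haT hbX
      have hlt : l.idxOf b < n := (mem_take_iff_indexOf l hbl n).1 hbT
      have hne : l.idxOf b ≠ l.idxOf a := by
        intro h
        exact hab.ne' ((List.idxOf_inj (y := a) hbl).1 h)
      omega
    have tstep : ∀ a b, Relation.TransGen r a b → l.idxOf b < l.idxOf a := by
      intro a b h
      induction h with
      | single h => exact step _ _ h
      | tail _ h ih => exact lt_trans (step _ _ h) ih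
    exact absurd (tstep v v hcyc) (lt_irrefl _)
  · intro hnc
    have hirr : ∀ v, ¬ Relation.TransGen r v v := by
      intro v h
      apply hnc
      refine ⟨v, ?_, h⟩
      cases h with
      | single h => exact h.1
      | tail _ h => exact h.2.1
    obtain ⟨l, hnd, hmem, hcl⟩ := topo r hirr X
    refine ⟨l, hnd, hmem, fun n _ => ?_⟩
    refine (key G p q hq h2 f X hf hf' (fun v => v ∈ l.take n)
      (fun v hv => (hmem v).1 (List.take_subset n l hv))).2 ?_
    intro a b hab harc haS hbX
    exact hcl a b n ⟨(hmem a).1 (List.take_subset n l haS), hbX, hab, harc⟩ hbX haS
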